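/- Fix a string q ∈ A_d^N and sample a uniformly random subset t ⊆ {1,...,N} of size m ≤ N/2. Then the probability that |w(q_t) - w(q_{-t})| > δ is at most 2·exp(-δ²·m·N/(N+2)), where n = N - m. -/

import Mathlib

open Real Finset

/-- Hoeffding's lemma for a two-point (Bernoulli) distribution. -/
lemma hoeffding_scalar (p qq x : ℝ) (hp : 0 ≤ p) (hq : 0 ≤ qq) (hpq : p + qq = 1) :
    p * Real.exp (x * qq) + qq * Real.exp (-(x * p)) ≤ Real.exp (x ^ 2 / 8) := by
  rcases eq_or_lt_of_le hp with hp0 | hp0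
  · -- p = 0, qq = 1
    have hq1 : qq = 1 := by linarith
    rw [← hp0, hq1]
    simpa using Real.one_le_exp (by positivity : (0:ℝ) ≤ x ^ 2 / 8)
  rcases eq_or_lt_of_le hq with hq0 | hq0
  · have hp1 : p = 1 := by linarith
    rw [← hq0, hp1]
    simpa using Real.one_le_exp (by positivity : (0:ℝ) ≤ x ^ 2 / 8)
  -- main case : 0 < p, 0 < qq
  have hd : ∀ y : ℝ, 0 < qq + p * Real.exp y := fun y => by positivity
  set F : ℝ → ℝ := fun y => y ^ 2 / 8 + p * y - Real.log (qq + p * Real.exp y) with hF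
  set G : ℝ → ℝ := fun y => y / 4 + p - p * Real.exp y / (qq + p * Real.exp y) with hG
  have hFd : ∀ y : ℝ, HasDerivAt F (G y) y := by
    intro y
    have h1 : HasDerivAt (fun y : ℝ => qq + p * Real.exp y) (p * Real.exp y) y := by
      simpa using ((Real.hasDerivAt_exp y).const_mul p).const_add qq
    have h2 : HasDerivAt (fun y : ℝ => Real.log (qq + p * Real.exp y))
        (p * Real.exp y / (qq + p * Real.exp y)) y := h1.log (hd y).ne'
    have h3 : HasDerivAt (fun y : ℝ => y ^ 2 / 8 + p * y) (y / 4 + p) y := by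
      have := ((hasDerivAt_pow 2 y).div_const 8).add ((hasDerivAt_id y).const_mul p)
      exact this.congr_deriv (by ring)
    exact h3.sub h2
  have hGd : ∀ y : ℝ, HasDerivAt G
      (1 / 4 - p * qq * Real.exp y / (qq + p * Real.exp y) ^ 2) y := by
    intro y
    have h1 : HasDerivAt (fun y : ℝ => qq + p * Real.exp y) (p * Real.exp y) y := by
      simpa using ((Real.hasDerivAt_exp y).const_mul p).const_add qq
    have h2 : HasDerivAt (fun y : ℝ => p * Real.exp y) (p * Real.exp y) y :=
      (Real.hasDerivAt_exp y).const_mul p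
    have h3 := h2.div h1 (hd y).ne'
    have h4 : HasDerivAt (fun y : ℝ => y / 4 + p) (1 / 4) y := by
      simpa using ((hasDerivAt_id y).div_const 4).add_const p
    have h5 := h4.sub h3
    have := (hd y).ne'
    exact h5.congr_deriv (by ring)
  have hGderiv : ∀ y : ℝ, 0 ≤ deriv G y := by
    intro y
    rw [(hGd y).deriv]
    have key : 4 * (p * qq * Real.exp y) ≤ (qq + p * Real.exp y) ^ 2 := by
      nlinarith [sq_nonneg (qq - p * Real.exp y), Real.exp_pos y]
    have h2 : p * qq * Real.exp y / (qq + p * Real.exp y) ^ 2 ≤ 1 / 4 := by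
      rw [div_le_div_iff₀ (by positivity) (by norm_num)]
      linarith
    linarith
  have hGmono : Monotone G := monotone_of_deriv_nonneg
    (fun y => (hGd y).differentiableAt) (by simpa using hGderiv)
  have hG0 : G 0 = 0 := by
    show (0:ℝ) / 4 + p - p * Real.exp 0 / (qq + p * Real.exp 0) = 0
    rw [Real.exp_zero, mul_one]
    have h1 : qq + p = 1 := by linarith
    rw [h1]
    simp
  have hF0 : F 0 = 0 := by
    simp [hF, hpq]
    exact Or.inr (Or.inl (by linarith))
  have hFnn : ∀ y : ℝ, 0 ≤ F y := by
    intro y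
    rcases le_or_gt 0 y with hy | hy
    · have hmono : MonotoneOn F (Set.Ici 0) := by
        apply monotoneOn_of_deriv_nonneg (convex_Ici 0)
        · exact Continuous.continuousOn (by
            have : Differentiable ℝ F := fun y => (hFd y).differentiableAt
            exact this.continuous)
        · exact fun y _ => ((hFd y).differentiableAt).differentiableWithinAt
        · intro z hz
          rw [(hFd z).deriv]
          rw [interior_Ici] at hz
          have := hGmono (le_of_lt hz)
          rw [hG0] at this
          linarith
      have := hmono (Set.self_mem_Ici) (Set.mem_Ici.mpr hy) hy
      linarith [hF0]
    · have hmono : AntitoneOn F (Set.Iic 0) := by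
        apply antitoneOn_of_deriv_nonpos (convex_Iic 0)
        · exact Continuous.continuousOn (by
            have : Differentiable ℝ F := fun y => (hFd y).differentiableAt
            exact this.continuous)
        · exact fun y _ => ((hFd y).differentiableAt).differentiableWithinAt
        · intro z hz
          rw [(hFd z).deriv]
          rw [interior_Iic] at hz
          have := hGmono (le_of_lt hz)
          rw [hG0] at this
          linarith
      have := hmono (Set.mem_Iic.mpr hy.le) (Set.self_mem_Iic) hy.le
      linarith [hF0]
  -- conclude
  have hFx := hFnn x
  have hlog : Real.log (qq + p * Real.exp x) ≤ x ^ 2 / 8 + p * x := by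
    have := hFx; simp only [hF] at this; linarith
  have hexp : qq + p * Real.exp x ≤ Real.exp (x ^ 2 / 8 + p * x) := by
    calc qq + p * Real.exp x = Real.exp (Real.log (qq + p * Real.exp x)) :=
          (Real.exp_log (hd x)).symm
      _ ≤ _ := Real.exp_le_exp.mpr hlog
  have hfinal : p * Real.exp (x * qq) + qq * Real.exp (-(x * p))
      = Real.exp (-(p * x)) * (qq + p * Real.exp x) := by
    have e1 : Real.exp (x * qq) = Real.exp (-(p * x)) * Real.exp x := by
      rw [← Real.exp_add]
      congr 1
      have h1 : qq = 1 - p := by linarith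
      rw [h1]; ring
    have e2 : Real.exp (-(x * p)) = Real.exp (-(p * x)) := by ring_nf
    rw [e1, e2]; ring
  rw [hfinal]
  calc Real.exp (-(p * x)) * (qq + p * Real.exp x)
      ≤ Real.exp (-(p * x)) * Real.exp (x ^ 2 / 8 + p * x) := by
        apply mul_le_mul_of_nonneg_left hexp (Real.exp_pos _).le
    _ = Real.exp (x ^ 2 / 8) := by rw [← Real.exp_add]; ring_nf


lemma key_count {α : Type*} [DecidableEq α] (U : Finset α) (m : ℕ) (f : Finset α → ℝ) :
    ∑ x ∈ U, ∑ s ∈ (U.erase x).powersetCard m, f (insert x s)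
      = ((m + 1 : ℕ) : ℝ) * ∑ t ∈ U.powersetCard (m + 1), f t := by
  have h1 : ∀ x ∈ U, ∑ s ∈ (U.erase x).powersetCard m, f (insert x s)
      = ∑ t ∈ (U.powersetCard (m + 1)).filter (fun t => x ∈ t), f t := by
    intro x hx
    refine Finset.sum_nbij' (i := fun s => insert x s) (j := fun t => t.erase x) ?_ ?_ ?_ ?_ ?_
    · intro s hs
      rw [Finset.mem_powersetCard] at hs
      rw [Finset.mem_filter, Finset.mem_powersetCard]
      have hxs : x ∉ s := fun h => (Finset.mem_erase.mp (hs.1 h)).1 rfl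
      refine ⟨⟨?_, ?_⟩, Finset.mem_insert_self x s⟩
      · exact Finset.insert_subset hx (hs.1.trans (Finset.erase_subset x U))
      · rw [Finset.card_insert_of_notMem hxs, hs.2]
    · intro t ht
      rw [Finset.mem_filter, Finset.mem_powersetCard] at ht
      rw [Finset.mem_powersetCard]
      exact ⟨Finset.erase_subset_erase x ht.1.1,
        by rw [Finset.card_erase_of_mem ht.2, ht.1.2]; rfl⟩
    · intro s hs
      rw [Finset.mem_powersetCard] at hs
      have hxs : x ∉ s := fun h => (Finset.mem_erase.mp (hs.1 h)).1 rfl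
      exact Finset.erase_insert hxs
    · intro t ht
      rw [Finset.mem_filter] at ht
      exact Finset.insert_erase ht.2
    · intro s hs; rfl
  calc ∑ x ∈ U, ∑ s ∈ (U.erase x).powersetCard m, f (insert x s)
      = ∑ x ∈ U, ∑ t ∈ U.powersetCard (m + 1), if x ∈ t then f t else 0 := by
        refine Finset.sum_congr rfl fun x hx => ?_
        rw [h1 x hx, Finset.sum_filter]
    _ = ∑ t ∈ U.powersetCard (m + 1), ∑ x ∈ U, if x ∈ t then f t else 0 :=
        Finset.sum_comm
    _ = ((m + 1 : ℕ) : ℝ) * ∑ t ∈ U.powersetCard (m + 1), f t := by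
        rw [Finset.mul_sum]
        refine Finset.sum_congr rfl fun t ht => ?_
        rw [Finset.mem_powersetCard] at ht
        rw [Finset.sum_ite_mem, Finset.inter_eq_right.mpr ht.1, Finset.sum_const, ht.2]
        simp [mul_comm]


noncomputable def gV (N m : ℕ) : ℝ :=
  ((N : ℝ) - m) ^ 2 * ∑ k ∈ Finset.range m, (1 / ((N : ℝ) - (k + 1))) ^ 2

lemma gV_nonneg (N m : ℕ) : 0 ≤ gV N m := by
  unfold gV
  positivity

lemma gV_rec (N m : ℕ) (hN : 1 ≤ N) :
    gV N (m + 1) = gV (N - 1) m + (((N : ℝ) - (m + 1)) / ((N : ℝ) - 1)) ^ 2 := by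
  have hcast : ((N - 1 : ℕ) : ℝ) = (N : ℝ) - 1 := by
    push_cast [hN]; ring
  unfold gV
  rw [Finset.sum_range_succ']
  rw [hcast]
  have : ∀ k : ℕ, ((N : ℝ) - ((k + 1 : ℕ) + 1)) = ((N : ℝ) - 1 - (k + 1)) := by
    intro k; push_cast; ring
  rw [mul_add]
  congr 1
  · have h2 : ((N:ℝ) - 1 - (m:ℝ)) = ((N:ℝ) - ((m:ℕ) + 1 : ℕ)) := by push_cast; ring
    rw [show ((N:ℝ) - ((m:ℕ)+1:ℕ)) = (N:ℝ) - ((m:ℝ)+1) by push_cast; ring] at h2 ⊢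
    rw [← h2]
    congr 1
    refine Finset.sum_congr rfl fun k _ => ?_
    congr 2
    push_cast; ring
  · push_cast
    norm_num
    rw [div_pow, div_eq_mul_inv]

lemma mgf_bound {α : Type*} [DecidableEq α] :
    ∀ (m : ℕ) (U S : Finset α), S ⊆ U → m ≤ U.card → ∀ lam : ℝ,
      ∑ t ∈ U.powersetCard m,
          Real.exp (lam * (((t ∩ S).card : ℝ) - (m : ℝ) * S.card / U.card))
        ≤ (U.card.choose m : ℝ) * Real.exp (lam ^ 2 * gV U.card m / 8) := by
  intro m
  induction m with
  | zero =>
      intro U S hS hm lam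
      rw [Finset.powersetCard_zero]
      simp [gV]
  | succ m IH =>
      intro U S hS hm lam
      have hN1 : 1 ≤ U.card := le_trans (Nat.succ_le_succ (Nat.zero_le m)) hm
      rcases eq_or_lt_of_le hN1 with hNeq | hN2
      · -- U.card = 1, m = 0
        have hm0 : m = 0 := by omega
        subst hm0
        have hUS : U ∩ S = S := Finset.inter_eq_right.mpr hS
        have hpc : U.powersetCard 1 = {U} := by
          rw [show (1 : ℕ) = U.card from hNeq, Finset.powersetCard_self]
        rw [hpc, Finset.sum_singleton, hUS, ← hNeq]
        have hexp : (1 : ℝ) * (S.card : ℝ) / (1 : ℕ) = (S.card : ℝ) := by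
          norm_num
        rw [show ((1:ℕ):ℝ) * (S.card : ℝ) / ((1:ℕ):ℝ) = (S.card:ℝ) by norm_num]
        rw [sub_self, mul_zero, Real.exp_zero]
        have : gV 1 1 = 0 := by simp [gV]
        rw [this]
        norm_num
      · -- main case : 2 ≤ N
        set N := U.card with hNdef
        set K := S.card with hKdef
        have hKN : K ≤ N := Finset.card_le_card hS
        have hmN : m + 1 ≤ N := hm
        have hN0 : ((N : ℝ)) ≠ 0 := by positivity
        have hN1R : ((N : ℝ)) - 1 ≠ 0 := by
          have : (2 : ℝ) ≤ (N : ℝ) := by exact_mod_cast hN2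
          linarith
        set c : ℝ := ((N : ℝ) - (m + 1)) / ((N : ℝ) - 1) with hc
        set pp : ℝ := (K : ℝ) / (N : ℝ) with hpp
        set qq : ℝ := ((N : ℝ) - K) / (N : ℝ) with hqq
        have hpp0 : 0 ≤ pp := by positivity
        have hqq0 : 0 ≤ qq := by
          apply div_nonneg _ (by positivity)
          have : (K : ℝ) ≤ (N : ℝ) := by exact_mod_cast hKN
          linarith
        have hppqq : pp + qq = 1 := by
          rw [hpp, hqq]
          field_simp
          ring
        set B : ℝ := (((N - 1).choose m : ℕ) : ℝ) * Real.exp (lam ^ 2 * gV (N - 1) m / 8)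
          with hB
        have hB0 : 0 ≤ B := by positivity
        set f : Finset α → ℝ := fun t =>
          Real.exp (lam * (((t ∩ S).card : ℝ) - ((m + 1 : ℕ) : ℝ) * K / N)) with hf
        -- inner bounds
        have hinner_S : ∀ x ∈ S, ∑ s ∈ (U.erase x).powersetCard m, f (insert x s)
            ≤ Real.exp ((lam * c) * qq) * B := by
          intro x hx
          have hxU : x ∈ U := hS hx
          have hUec : (U.erase x).card = N - 1 := by rw [Finset.card_erase_of_mem hxU]
          have hSec : (S.erase x).card = K - 1 := by rw [Finset.card_erase_of_mem hx]
          have hK1 : 1 ≤ K := Finset.card_pos.mpr ⟨x, hx⟩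
          have hSes : S.erase x ⊆ U.erase x := Finset.erase_subset_erase x hS
          have hm' : m ≤ (U.erase x).card := by omega
          have IH' := IH (U.erase x) (S.erase x) hSes hm' lam
          rw [hUec, hSec, Nat.cast_sub hN1, Nat.cast_sub hK1, Nat.cast_one] at IH'
          have hgoal : ∀ s ∈ (U.erase x).powersetCard m,
              f (insert x s) = Real.exp ((lam * c) * qq) *
                Real.exp (lam * (((s ∩ S.erase x).card : ℝ) -
                  (m : ℝ) * ((K : ℝ) - 1) / ((N : ℝ) - 1))) := by
            intro s hs
            rw [Finset.mem_powersetCard] at hs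
            have hxs : x ∉ s := fun h => (Finset.mem_erase.mp (hs.1 h)).1 rfl
            have hins : insert x s ∩ S = insert x (s ∩ S.erase x) := by
              ext y
              simp only [Finset.mem_insert, Finset.mem_inter, Finset.mem_erase]
              constructor
              · rintro ⟨(rfl | hy), hyS⟩
                · exact Or.inl rfl
                · exact Or.inr ⟨hy, fun h => hxs (h ▸ hy), hyS⟩
              · rintro (rfl | ⟨hy, _, hyS⟩)
                · exact ⟨Or.inl rfl, hx⟩
                · exact ⟨Or.inr hy, hyS⟩
            have hxnotin : x ∉ s ∩ S.erase x := fun h => hxs (Finset.mem_inter.mp h).1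
            have hcard : ((insert x s ∩ S).card : ℝ) = ((s ∩ S.erase x).card : ℝ) + 1 := by
              rw [hins, Finset.card_insert_of_notMem hxnotin]
              push_cast; ring
            rw [hf]
            simp only
            rw [hcard, ← Real.exp_add]
            congr 1
            push_cast
            rw [hc, hqq]
            field_simp
            ring
          rw [Finset.sum_congr rfl hgoal, ← Finset.mul_sum]
          exact mul_le_mul_of_nonneg_left IH' (Real.exp_pos _).le
        have hinner_not : ∀ x ∈ U \ S, ∑ s ∈ (U.erase x).powersetCard m, f (insert x s)
            ≤ Real.exp (-((lam * c) * pp)) * B := by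
          intro x hx
          rw [Finset.mem_sdiff] at hx
          obtain ⟨hxU, hxS⟩ := hx
          have hUec : (U.erase x).card = N - 1 := by rw [Finset.card_erase_of_mem hxU]
          have hSsub : S ⊆ U.erase x := Finset.subset_erase.mpr ⟨hS, hxS⟩
          have hm' : m ≤ (U.erase x).card := by omega
          have IH' := IH (U.erase x) S hSsub hm' lam
          rw [hUec, Nat.cast_sub hN1, Nat.cast_one] at IH'
          have hgoal : ∀ s ∈ (U.erase x).powersetCard m,
              f (insert x s) = Real.exp (-((lam * c) * pp)) *
                Real.exp (lam * (((s ∩ S).card : ℝ) -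
                  (m : ℝ) * (K : ℝ) / ((N : ℝ) - 1))) := by
            intro s hs
            have hins : insert x s ∩ S = s ∩ S := by
              ext y
              simp only [Finset.mem_insert, Finset.mem_inter]
              constructor
              · rintro ⟨(rfl | hy), hyS⟩
                · exact absurd hyS hxS
                · exact ⟨hy, hyS⟩
              · rintro ⟨hy, hyS⟩
                exact ⟨Or.inr hy, hyS⟩
            rw [hf]
            simp only
            rw [hins, ← Real.exp_add]
            congr 1
            push_cast
            rw [hc, hpp]
            field_simp
            ring
          rw [Finset.sum_congr rfl hgoal, ← Finset.mul_sum]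
          exact mul_le_mul_of_nonneg_left IH' (Real.exp_pos _).le
        -- combine
        have hcount := key_count U m f
        have hsplit : ∑ x ∈ U \ S, (∑ s ∈ (U.erase x).powersetCard m, f (insert x s))
            + ∑ x ∈ S, (∑ s ∈ (U.erase x).powersetCard m, f (insert x s))
            = ∑ x ∈ U, (∑ s ∈ (U.erase x).powersetCard m, f (insert x s)) :=
          Finset.sum_sdiff hS
        have h1 : ∑ x ∈ S, (∑ s ∈ (U.erase x).powersetCard m, f (insert x s))
            ≤ (K : ℝ) * (Real.exp ((lam * c) * qq) * B) := by
          calc ∑ x ∈ S, (∑ s ∈ (U.erase x).powersetCard m, f (insert x s))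
              ≤ ∑ _x ∈ S, Real.exp ((lam * c) * qq) * B := Finset.sum_le_sum hinner_S
            _ = (K : ℝ) * (Real.exp ((lam * c) * qq) * B) := by
                rw [Finset.sum_const, nsmul_eq_mul]
        have h2 : ∑ x ∈ U \ S, (∑ s ∈ (U.erase x).powersetCard m, f (insert x s))
            ≤ ((N : ℝ) - K) * (Real.exp (-((lam * c) * pp)) * B) := by
          calc ∑ x ∈ U \ S, (∑ s ∈ (U.erase x).powersetCard m, f (insert x s))
              ≤ ∑ _x ∈ U \ S, Real.exp (-((lam * c) * pp)) * B :=
                Finset.sum_le_sum hinner_not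
            _ = ((N : ℝ) - K) * (Real.exp (-((lam * c) * pp)) * B) := by
                rw [Finset.sum_const, nsmul_eq_mul, Finset.card_sdiff_of_subset hS,
                  Nat.cast_sub hKN]
        have hhoef := hoeffding_scalar pp qq (lam * c) hpp0 hqq0 hppqq
        have hKpp : (K : ℝ) = (N : ℝ) * pp := by rw [hpp]; field_simp
        have hNKqq : (N : ℝ) - K = (N : ℝ) * qq := by rw [hqq]; field_simp
        have hmain : ((m + 1 : ℕ) : ℝ) * ∑ t ∈ U.powersetCard (m + 1), f t
            ≤ (N : ℝ) * Real.exp ((lam * c) ^ 2 / 8) * B := by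
          rw [← hcount, ← hsplit]
          calc ∑ x ∈ U \ S, (∑ s ∈ (U.erase x).powersetCard m, f (insert x s))
                + ∑ x ∈ S, (∑ s ∈ (U.erase x).powersetCard m, f (insert x s))
              ≤ ((N : ℝ) - K) * (Real.exp (-((lam * c) * pp)) * B)
                + (K : ℝ) * (Real.exp ((lam * c) * qq) * B) := add_le_add h2 h1
            _ = (N : ℝ) * (pp * Real.exp ((lam * c) * qq)
                + qq * Real.exp (-((lam * c) * pp))) * B := by
                linear_combination (Real.exp (-((lam * c) * pp)) * B) * hNKqq
                  + (Real.exp ((lam * c) * qq) * B) * hKpp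
            _ ≤ (N : ℝ) * Real.exp ((lam * c) ^ 2 / 8) * B := by
                apply mul_le_mul_of_nonneg_right _ hB0
                apply mul_le_mul_of_nonneg_left hhoef (Nat.cast_nonneg N)
        -- identify RHS
        have hchoose : (N : ℝ) * (((N - 1).choose m : ℕ) : ℝ)
            = ((m + 1 : ℕ) : ℝ) * ((N.choose (m + 1) : ℕ) : ℝ) := by
          have h := Nat.add_one_mul_choose_eq (N - 1) m
          have hN' : (N - 1).succ = N := Nat.succ_pred_eq_of_pos hN1
          rw [show N - 1 + 1 = N from hN'] at h
          have h2 : N * (N - 1).choose m = (m + 1) * N.choose (m + 1) := by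
            rw [h, mul_comm]
          exact_mod_cast h2
        have hexp : Real.exp ((lam * c) ^ 2 / 8) * Real.exp (lam ^ 2 * gV (N - 1) m / 8)
            = Real.exp (lam ^ 2 * gV N (m + 1) / 8) := by
          rw [← Real.exp_add]
          congr 1
          rw [gV_rec N m hN1, hc, mul_pow]
          ring
        have hRHS : (N : ℝ) * Real.exp ((lam * c) ^ 2 / 8) * B
            = ((m + 1 : ℕ) : ℝ) * (((N.choose (m + 1) : ℕ) : ℝ)
              * Real.exp (lam ^ 2 * gV N (m + 1) / 8)) := by
          rw [hB, ← hexp]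
          linear_combination (Real.exp ((lam * c) ^ 2 / 8)
            * Real.exp (lam ^ 2 * gV (N - 1) m / 8)) * hchoose
        rw [hRHS] at hmain
        have hm1 : (0 : ℝ) < ((m + 1 : ℕ) : ℝ) := by positivity
        have := le_of_mul_le_mul_left hmain hm1
        exact this

lemma count_exp {β : Type*} (P : Finset β) (g : β → ℝ) (pr : β → Prop) [DecidablePred pr]
    (h1 : ∀ t ∈ P, pr t → 1 ≤ g t) (h0 : ∀ t ∈ P, 0 ≤ g t) :
    ((P.filter pr).card : ℝ) ≤ ∑ t ∈ P, g t := by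
  calc ((P.filter pr).card : ℝ) = ∑ _t ∈ P.filter pr, (1 : ℝ) := by simp
    _ ≤ ∑ t ∈ P.filter pr, g t := Finset.sum_le_sum (fun t ht =>
        h1 t (Finset.mem_filter.mp ht).1 (Finset.mem_filter.mp ht).2)
    _ ≤ ∑ t ∈ P, g t := Finset.sum_le_sum_of_subset_of_nonneg
        (Finset.filter_subset _ _) (fun t ht _ => h0 t ht)

lemma gV_pos (N m : ℕ) (hm : 0 < m) (hmN : 2 * m ≤ N) : 0 < gV N m := by
  have hN2 : 2 ≤ N := by omega
  have hmltN : m < N := by omega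
  unfold gV
  apply mul_pos
  · have : (m : ℝ) < (N : ℝ) := by exact_mod_cast hmltN
    have h : 0 < (N : ℝ) - m := by linarith
    positivity
  · have h0 : (0 : ℕ) ∈ Finset.range m := Finset.mem_range.mpr hm
    have hterm : (0 : ℝ) < (1 / ((N : ℝ) - ((0 : ℕ) + 1))) ^ 2 := by
      have : (2 : ℝ) ≤ (N : ℝ) := by exact_mod_cast hN2
      have h1 : (0 : ℝ) < (N : ℝ) - ((0 : ℕ) + 1) := by push_cast; linarith
      positivity
    have hle := Finset.single_le_sum
      (f := fun k : ℕ => (1 / ((N : ℝ) - ((k : ℝ) + 1))) ^ 2)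
      (fun k _ => by positivity) h0
    calc (0 : ℝ) < (1 / ((N : ℝ) - (((0 : ℕ) : ℝ) + 1))) ^ 2 := by exact_mod_cast hterm
      _ ≤ _ := hle

lemma gV_le (N m : ℕ) (hm : 0 < m) (hmN : 2 * m ≤ N) :
    gV N m ≤ (m : ℝ) * (((N : ℝ) - m) + 1) / N := by
  have hN2 : 2 ≤ N := by omega
  set NR : ℝ := (N : ℝ) with hNR
  set mR : ℝ := (m : ℝ) with hmR
  set nR : ℝ := NR - mR with hnRdef
  have hmR1 : (1 : ℝ) ≤ mR := by rw [hmR]; exact_mod_cast hm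
  have h2m : 2 * mR ≤ NR := by rw [hmR, hNR]; exact_mod_cast hmN
  have hnR1 : (1 : ℝ) ≤ nR := by rw [hnRdef]; linarith
  have hnR0 : (0 : ℝ) < nR := by linarith
  have hNR0 : (0 : ℝ) < NR := by linarith
  have hterm : ∀ k ∈ Finset.range m, (1 / (NR - ((k : ℝ) + 1))) ^ 2
      ≤ (nR + 1) / nR * (1 / (NR - ((k : ℝ) + 1)) - 1 / (NR - (k : ℝ))) := by
    intro k hk
    rw [Finset.mem_range] at hk
    have hkm : (k : ℝ) + 1 ≤ mR := by
      rw [hmR]; exact_mod_cast Nat.succ_le_of_lt hk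
    set a : ℝ := NR - ((k : ℝ) + 1) with ha
    have hna : nR ≤ a := by rw [ha, hnRdef]; linarith
    have ha0 : (0 : ℝ) < a := by linarith
    have ha1 : NR - (k : ℝ) = a + 1 := by rw [ha]; ring
    rw [ha1]
    have hdiff : 1 / a - 1 / (a + 1) = 1 / (a * (a + 1)) := by
      field_simp
      ring
    rw [hdiff, div_pow, one_pow, div_mul_div_comm, mul_one]
    rw [div_le_div_iff₀ (by positivity) (by positivity)]
    nlinarith [mul_le_mul_of_nonneg_right hna ha0.le]
  have htel : ∑ k ∈ Finset.range m, (1 / (NR - ((k : ℝ) + 1)) - 1 / (NR - (k : ℝ)))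
      = 1 / nR - 1 / NR := by
    have h := Finset.sum_range_sub (fun k : ℕ => 1 / (NR - (k : ℝ))) m
    calc ∑ k ∈ Finset.range m, (1 / (NR - ((k : ℝ) + 1)) - 1 / (NR - (k : ℝ)))
        = ∑ k ∈ Finset.range m, (1 / (NR - ((k + 1 : ℕ) : ℝ)) - 1 / (NR - (k : ℝ))) := by
          refine Finset.sum_congr rfl fun k _ => ?_
          push_cast
          ring_nf
      _ = 1 / (NR - (m : ℝ)) - 1 / (NR - ((0 : ℕ) : ℝ)) := h
      _ = 1 / nR - 1 / NR := by rw [hnRdef, hmR]; norm_num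
  have hsum : ∑ k ∈ Finset.range m, (1 / (NR - ((k : ℝ) + 1))) ^ 2
      ≤ (nR + 1) / nR * (1 / nR - 1 / NR) := by
    calc ∑ k ∈ Finset.range m, (1 / (NR - ((k : ℝ) + 1))) ^ 2
        ≤ ∑ k ∈ Finset.range m, (nR + 1) / nR * (1 / (NR - ((k : ℝ) + 1)) - 1 / (NR - (k : ℝ))) :=
          Finset.sum_le_sum hterm
      _ = (nR + 1) / nR * (1 / nR - 1 / NR) := by rw [← Finset.mul_sum, htel]
  calc gV N m = nR ^ 2 * ∑ k ∈ Finset.range m, (1 / (NR - ((k : ℝ) + 1))) ^ 2 := by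
        unfold gV
        rw [← hNR, ← hmR, ← hnRdef]
    _ ≤ nR ^ 2 * ((nR + 1) / nR * (1 / nR - 1 / NR)) := by
        apply mul_le_mul_of_nonneg_left hsum (by positivity)
    _ = mR * (nR + 1) / NR := by
        rw [hnRdef]
        have hne : NR - mR ≠ 0 := by linarith
        field_simp
        ring

set_option maxHeartbeats 1600000 in
/-- Classical sampling bound: for a fixed `q ∈ A_d^N` and a uniformly random
subset `t` of size `m ≤ N/2`, the probability that the relative Hamming weights
of `q_t` and `q_{-t}` differ by more than `δ` is at most `2·exp(-δ²mN/(N+2))`. -/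
theorem stmt4 (d N m : ℕ) (hm : 0 < m) (hmN : 2 * m ≤ N)
    (q : Fin N → Fin d) (δ : ℝ) (hδ : 0 < δ) :
    ((((Finset.univ : Finset (Fin N)).powersetCard m).filter (fun t =>
        |((t.filter (fun k => (q k : ℕ) ≠ 0)).card : ℝ) / m -
          ((tᶜ.filter (fun k => (q k : ℕ) ≠ 0)).card : ℝ) / ((N : ℝ) - m)| > δ)).card : ℝ) /
      (((Finset.univ : Finset (Fin N)).powersetCard m).card : ℝ)
      ≤ 2 * Real.exp (-(δ ^ 2) * m * N / ((N : ℝ) + 2)) := by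
  classical
  have hN2 : 2 ≤ N := by omega
  have hmN' : m ≤ N := by omega
  set pred : Fin N → Prop := fun k => (q k : ℕ) ≠ 0 with hpred
  set S : Finset (Fin N) := Finset.univ.filter pred with hSdef
  set P : Finset (Finset (Fin N)) := (Finset.univ : Finset (Fin N)).powersetCard m with hPdef
  set K : ℕ := S.card with hKdef
  have hcardU : (Finset.univ : Finset (Fin N)).card = N := Finset.card_fin N
  have hPcard : P.card = N.choose m := by
    rw [hPdef, Finset.card_powersetCard, hcardU]
  have hC0 : (0 : ℝ) < (N.choose m : ℝ) := by
    exact_mod_cast Nat.choose_pos hmN'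
  -- real numbers
  have hmR1 : (1 : ℝ) ≤ (m : ℝ) := by exact_mod_cast hm
  have hmR0 : (0 : ℝ) < (m : ℝ) := by linarith
  have hNR2 : (2 : ℝ) ≤ (N : ℝ) := by exact_mod_cast hN2
  have h2m : 2 * (m : ℝ) ≤ (N : ℝ) := by exact_mod_cast hmN
  have hnR1 : (1 : ℝ) ≤ (N : ℝ) - m := by linarith
  have hnR0 : (0 : ℝ) < (N : ℝ) - m := by linarith
  have hNR0 : (0 : ℝ) < (N : ℝ) := by linarith
  set μ : ℝ := (m : ℝ) * K / N with hμdef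
  set τ : ℝ := δ * m * ((N : ℝ) - m) / N with hτdef
  have hτ0 : 0 < τ := by
    rw [hτdef]
    apply div_pos _ hNR0
    apply mul_pos (mul_pos hδ hmR0) hnR0
  set V : ℝ := gV N m with hVdef
  have hV0 : 0 < V := gV_pos N m hm hmN
  have hVle : V ≤ (m : ℝ) * (((N : ℝ) - m) + 1) / N := gV_le N m hm hmN
  set X : Finset (Fin N) → ℝ := fun t => ((t.filter pred).card : ℝ) with hXdef
  -- mgf bound
  have hXeq : ∀ t : Finset (Fin N), t ∩ S = t.filter pred := by
    intro t
    rw [hSdef]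
    ext y
    simp [Finset.mem_filter, Finset.mem_inter]
  have hmgf : ∀ lam : ℝ, ∑ t ∈ P, Real.exp (lam * (X t - μ))
      ≤ (N.choose m : ℝ) * Real.exp (lam ^ 2 * V / 8) := by
    intro lam
    have h := mgf_bound m Finset.univ S (Finset.subset_univ S)
      (by rw [hcardU]; exact hmN') lam
    rw [hcardU] at h
    simp only [hXeq] at h
    exact h
  set lam : ℝ := 4 * τ / V with hlamdef
  have hlam0 : 0 ≤ lam := by positivity
  have hlamexp : (N.choose m : ℝ) * Real.exp (lam ^ 2 * V / 8) * Real.exp (-(lam * τ))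
      = (N.choose m : ℝ) * Real.exp (-(2 * τ ^ 2 / V)) := by
    rw [mul_assoc, ← Real.exp_add]
    congr 2
    rw [hlamdef]
    field_simp
    ring
  have hup : ((P.filter (fun t => τ ≤ X t - μ)).card : ℝ)
      ≤ (N.choose m : ℝ) * Real.exp (-(2 * τ ^ 2 / V)) := by
    rw [← hlamexp]
    calc ((P.filter (fun t => τ ≤ X t - μ)).card : ℝ)
        ≤ ∑ t ∈ P, Real.exp (lam * (X t - μ)) * Real.exp (-(lam * τ)) := by
          apply count_exp P _ _ _ (fun t _ => by positivity)
          intro t _ ht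
          rw [← Real.exp_add]
          apply Real.one_le_exp
          have h1 : lam * (X t - μ) + -(lam * τ) = lam * ((X t - μ) - τ) := by ring
          rw [h1]
          exact mul_nonneg hlam0 (by linarith)
      _ = (∑ t ∈ P, Real.exp (lam * (X t - μ))) * Real.exp (-(lam * τ)) := by
          rw [Finset.sum_mul]
      _ ≤ (N.choose m : ℝ) * Real.exp (lam ^ 2 * V / 8) * Real.exp (-(lam * τ)) :=
          mul_le_mul_of_nonneg_right (hmgf lam) (Real.exp_pos _).le
  have hmgfneg : ∑ t ∈ P, Real.exp ((-lam) * (X t - μ))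
      ≤ (N.choose m : ℝ) * Real.exp (lam ^ 2 * V / 8) := by
    have h := hmgf (-lam)
    rw [neg_pow] at h
    simpa using h
  have hdown : ((P.filter (fun t => X t - μ ≤ -τ)).card : ℝ)
      ≤ (N.choose m : ℝ) * Real.exp (-(2 * τ ^ 2 / V)) := by
    rw [← hlamexp]
    calc ((P.filter (fun t => X t - μ ≤ -τ)).card : ℝ)
        ≤ ∑ t ∈ P, Real.exp ((-lam) * (X t - μ)) * Real.exp (-(lam * τ)) := by
          apply count_exp P _ _ _ (fun t _ => by positivity)
          intro t _ ht
          rw [← Real.exp_add]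
          apply Real.one_le_exp
          have h1 : (-lam) * (X t - μ) + -(lam * τ) = lam * (-((X t - μ) + τ)) := by ring
          rw [h1]
          exact mul_nonneg hlam0 (by linarith)
      _ = (∑ t ∈ P, Real.exp ((-lam) * (X t - μ))) * Real.exp (-(lam * τ)) := by
          rw [Finset.sum_mul]
      _ ≤ (N.choose m : ℝ) * Real.exp (lam ^ 2 * V / 8) * Real.exp (-(lam * τ)) :=
          mul_le_mul_of_nonneg_right hmgfneg (Real.exp_pos _).le
  -- complement card
  have hY : ∀ t : Finset (Fin N), ((tᶜ.filter pred).card : ℝ) = (K : ℝ) - X t := by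
    intro t
    have hdisj : Disjoint (t.filter pred) (tᶜ.filter pred) :=
      Finset.disjoint_filter_filter disjoint_compl_right
    have hsum : (t.filter pred).card + (tᶜ.filter pred).card = K := by
      rw [← Finset.card_union_of_disjoint hdisj, ← Finset.filter_union,
        Finset.union_compl]
    have := congrArg (fun x : ℕ => (x : ℝ)) hsum
    push_cast at this
    rw [hXdef]
    simp only
    linarith
  -- event inclusion
  have hsub : P.filter (fun t =>
        |((t.filter pred).card : ℝ) / m - ((tᶜ.filter pred).card : ℝ) / ((N : ℝ) - m)| > δ)
      ⊆ (P.filter (fun t => τ ≤ X t - μ)) ∪ (P.filter (fun t => X t - μ ≤ -τ)) := by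
    intro t ht
    rw [Finset.mem_filter] at ht
    obtain ⟨htP, hE⟩ := ht
    have hiden : ((t.filter pred).card : ℝ) / m - ((tᶜ.filter pred).card : ℝ) / ((N : ℝ) - m)
        = (N : ℝ) * (X t - μ) / ((m : ℝ) * ((N : ℝ) - m)) := by
      rw [hY t, hXdef, hμdef]
      simp only
      field_simp
      ring
    rw [hiden] at hE
    have habs : τ < |X t - μ| := by
      by_contra hcon
      push_neg at hcon
      have h1 : |(N : ℝ) * (X t - μ) / ((m : ℝ) * ((N : ℝ) - m))|
          = (N : ℝ) * |X t - μ| / ((m : ℝ) * ((N : ℝ) - m)) := by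
        rw [abs_div, abs_mul, abs_of_pos hNR0, abs_of_pos (mul_pos hmR0 hnR0)]
      rw [h1] at hE
      have h2 : (N : ℝ) * |X t - μ| / ((m : ℝ) * ((N : ℝ) - m))
          ≤ (N : ℝ) * τ / ((m : ℝ) * ((N : ℝ) - m)) := by
        apply div_le_div_of_nonneg_right ?_ (mul_pos hmR0 hnR0).le
        exact mul_le_mul_of_nonneg_left hcon hNR0.le
      have h3 : (N : ℝ) * τ / ((m : ℝ) * ((N : ℝ) - m)) = δ := by
        rw [hτdef]
        field_simp
      rw [h3] at h2
      exact absurd (lt_of_lt_of_le hE h2) (lt_irrefl δ)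
    rcases lt_abs.mp habs with h | h
    · exact Finset.mem_union_left _ (Finset.mem_filter.mpr ⟨htP, h.le⟩)
    · exact Finset.mem_union_right _ (Finset.mem_filter.mpr ⟨htP, by linarith⟩)
  -- conclusion
  have hcard : ((P.filter (fun t =>
        |((t.filter pred).card : ℝ) / m - ((tᶜ.filter pred).card : ℝ) / ((N : ℝ) - m)| > δ)).card : ℝ)
      ≤ 2 * ((N.choose m : ℝ) * Real.exp (-(2 * τ ^ 2 / V))) := by
    have h1 := Finset.card_le_card hsub
    have h2 := Finset.card_union_le (P.filter (fun t => τ ≤ X t - μ))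
      (P.filter (fun t => X t - μ ≤ -τ))
    have h3 : ((P.filter (fun t =>
        |((t.filter pred).card : ℝ) / m - ((tᶜ.filter pred).card : ℝ) / ((N : ℝ) - m)| > δ)).card : ℝ)
        ≤ ((P.filter (fun t => τ ≤ X t - μ)).card : ℝ)
          + ((P.filter (fun t => X t - μ ≤ -τ)).card : ℝ) := by
      exact_mod_cast le_trans h1 h2
    linarith [hup, hdown]
  -- exponent comparison
  have hexp_cmp : Real.exp (-(2 * τ ^ 2 / V)) ≤ Real.exp (-(δ ^ 2) * m * N / ((N : ℝ) + 2)) := by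
    rw [Real.exp_le_exp]
    have hkey : δ ^ 2 * m * N / ((N : ℝ) + 2) ≤ 2 * τ ^ 2 / V := by
      have hM0 : (0 : ℝ) < (m : ℝ) * (((N : ℝ) - m) + 1) / N := by positivity
      have h1 : 2 * τ ^ 2 / ((m : ℝ) * (((N : ℝ) - m) + 1) / N) ≤ 2 * τ ^ 2 / V :=
        div_le_div_of_nonneg_left (by positivity) hV0 hVle
      refine le_trans ?_ h1
      rw [div_le_div_iff₀ (by positivity) hM0]
      have hpoly : (N : ℝ) ^ 2 * (((N : ℝ) - m) + 1) ≤ 2 * ((N : ℝ) - m) ^ 2 * ((N : ℝ) + 2) := by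
        nlinarith [mul_nonneg (mul_nonneg (sub_nonneg.mpr h2m) hnR0.le) hNR0.le,
          mul_nonneg (sub_nonneg.mpr h2m) (by linarith : (0:ℝ) ≤ 2 * ((N:ℝ) - m) + N)]
      calc δ ^ 2 * m * N * ((m : ℝ) * (((N : ℝ) - m) + 1) / N)
          = δ ^ 2 * (m : ℝ) ^ 2 * ((N : ℝ) ^ 2 * (((N : ℝ) - m) + 1)) / (N : ℝ) ^ 2 := by
            field_simp
        _ ≤ δ ^ 2 * (m : ℝ) ^ 2 * (2 * ((N : ℝ) - m) ^ 2 * ((N : ℝ) + 2)) / (N : ℝ) ^ 2 := by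
            gcongr
        _ = 2 * τ ^ 2 * ((N : ℝ) + 2) := by
            rw [hτdef]
            field_simp
    have hrw : -(δ ^ 2) * (m : ℝ) * N / ((N : ℝ) + 2)
        = -(δ ^ 2 * (m : ℝ) * N / ((N : ℝ) + 2)) := by ring
    rw [hrw]
    exact neg_le_neg (le_trans (le_of_eq (by ring)) hkey)
  -- final division
  rw [hPcard, div_le_iff₀ hC0]
  calc ((P.filter (fun t =>
        |((t.filter pred).card : ℝ) / m - ((tᶜ.filter pred).card : ℝ) / ((N : ℝ) - m)| > δ)).card : ℝ)
      ≤ 2 * ((N.choose m : ℝ) * Real.exp (-(2 * τ ^ 2 / V))) := hcard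
    _ ≤ 2 * ((N.choose m : ℝ) * Real.exp (-(δ ^ 2) * m * N / ((N : ℝ) + 2))) := by
        apply mul_le_mul_of_nonneg_left _ (by norm_num)
        exact mul_le_mul_of_nonneg_left hexp_cmp hC0.le
    _ = 2 * Real.exp (-(δ ^ 2) * m * N / ((N : ℝ) + 2)) * (N.choose m : ℝ) := by ring
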